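/- Let a ∈ Bⁿ with 0 < |a| < 1, set a* = a/|a|², r² = |a*|² − 1, and let σ_a(x) = a* + r²·(x − a*)/|x − a*|² be the inversion in the sphere with center a* and radius r (a Möbius transformation of Bⁿ onto itself with σ_a(a) = 0). Then for all x, y ∈ Bⁿ, ((1−|a|)/(1+|a|))·ĉ_{Bⁿ}(x,y) ≤ ĉ_{Bⁿ}(σ_a(x), σ_a(y)) ≤ ((1+|a|)/(1−|a|))·ĉ_{Bⁿ}(x,y). -/

import Mathlib

open Set Metric

/-- The `ĉ` metric: `ĉ_D(x,y) = sup_{p ∈ ∂D} |x−y| / max(|x−p|, |y−p|)`. -/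
noncomputable def ctilde {E : Type*} [SeminormedAddCommGroup E] (D : Set E) (x y : E) : ℝ :=
  ⨆ p : frontier D, ‖x - y‖ / max ‖x - (p : E)‖ ‖y - (p : E)‖

/-- The point `a* = a/|a|²`. -/
noncomputable def aStar {E : Type*} [NormedAddCommGroup E] [NormedSpace ℝ E] (a : E) : E :=
  (‖a‖ ^ 2)⁻¹ • a

/-- The inversion `σ_a(x) = a* + r²·(x − a*)/|x − a*|²` in the sphere of center `a*`
and radius `r`, where `r² = |a*|² − 1`. -/
noncomputable def sigmaInv {E : Type*} [NormedAddCommGroup E] [NormedSpace ℝ E] (a x : E) :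
    E :=
  aStar a + ((‖aStar a‖ ^ 2 - 1) / ‖x - aStar a‖ ^ 2) • (x - aStar a)

open EuclideanGeometry in
lemma sigmaInv_eq_inversion {E : Type*} [NormedAddCommGroup E] [InnerProductSpace ℝ E]
    (a x : E) (h : 1 ≤ ‖aStar a‖) :
    sigmaInv a x = inversion (aStar a) (Real.sqrt (‖aStar a‖ ^ 2 - 1)) x := by
  simp only [sigmaInv, inversion, vsub_eq_sub, vadd_eq_add]
  rw [div_pow, Real.sq_sqrt (by nlinarith), dist_eq_norm]
  abel

lemma key_chain (ρ d e m A B L lo hi : ℝ) (hρ : 0 < ρ) (hlo : 0 < lo)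
    (hdlo : lo ≤ d) (hdhi : d ≤ hi) (helo : lo ≤ e) (hehi : e ≤ hi)
    (hmlo : lo ≤ m) (hmhi : m ≤ hi) (hA : 0 < A) (hB : 0 < B) (hL : 0 ≤ L) :
    lo / hi * (L / max A B) ≤ (ρ / (d * e) * L) / max (ρ / (d * m) * A) (ρ / (e * m) * B) ∧
    (ρ / (d * e) * L) / max (ρ / (d * m) * A) (ρ / (e * m) * B) ≤ hi / lo * (L / max A B) := by
  have hd : 0 < d := lt_of_lt_of_le hlo hdlo
  have he : 0 < e := lt_of_lt_of_le hlo helo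
  have hm : 0 < m := lt_of_lt_of_le hlo hmlo
  have hhi : 0 < hi := lt_of_lt_of_le hd hdhi
  have h1 : ρ / (d * m) * A = ρ / (d * e * m) * (e * A) := by field_simp
  have h2 : ρ / (e * m) * B = ρ / (d * e * m) * (d * B) := by field_simp
  rw [h1, h2, ← mul_max_of_nonneg _ _ (by positivity : (0:ℝ) ≤ ρ / (d * e * m))]
  set M := max (e * A) (d * B) with hMdef
  set N := max A B with hNdef
  have hN : 0 < N := lt_of_lt_of_le hA (le_max_left _ _)
  have hMlo : lo * N ≤ M := by
    rw [hNdef, hMdef, mul_max_of_nonneg _ _ hlo.le]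
    exact max_le_max (mul_le_mul_of_nonneg_right helo hA.le)
      (mul_le_mul_of_nonneg_right hdlo hB.le)
  have hMhi : M ≤ hi * N := by
    apply max_le
    · calc e * A ≤ hi * A := mul_le_mul_of_nonneg_right hehi hA.le
        _ ≤ hi * N := mul_le_mul_of_nonneg_left (le_max_left _ _) hhi.le
    · calc d * B ≤ hi * B := mul_le_mul_of_nonneg_right hdhi hB.le
        _ ≤ hi * N := mul_le_mul_of_nonneg_left (le_max_right _ _) hhi.le
  have hM : 0 < M := lt_of_lt_of_le (by positivity) hMlo
  have hquot : (ρ / (d * e) * L) / (ρ / (d * e * m) * M) = L * m / M := by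
    field_simp
  rw [hquot]
  constructor
  · rw [div_mul_div_comm, div_le_div_iff₀ (by positivity) hM]
    have t1 : lo * L * M ≤ m * L * M :=
      mul_le_mul_of_nonneg_right (mul_le_mul_of_nonneg_right hmlo hL) hM.le
    have t2 : m * L * M ≤ m * L * (hi * N) :=
      mul_le_mul_of_nonneg_left hMhi (by positivity)
    nlinarith [t1, t2]
  · rw [div_mul_div_comm, div_le_div_iff₀ hM (by positivity)]
    have t1 : L * m * (lo * N) ≤ L * hi * (lo * N) := by
      have : L * m ≤ L * hi := mul_le_mul_of_nonneg_left hmhi hL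
      exact mul_le_mul_of_nonneg_right this (by positivity)
    have t2 : L * hi * (lo * N) ≤ L * hi * M :=
      mul_le_mul_of_nonneg_left hMlo (by positivity)
    nlinarith [t1, t2]

section helpers
variable {n : ℕ} (a : EuclideanSpace ℝ (Fin n))

lemma norm_aStar (ha0 : a ≠ 0) : ‖aStar a‖ = ‖a‖⁻¹ := by
  have hna : 0 < ‖a‖ := norm_pos_iff.mpr ha0
  rw [aStar, norm_smul, norm_inv, norm_pow, norm_norm]
  field_simp

lemma sigmaInv_self (ha0 : a ≠ 0) (ha1 : ‖a‖ < 1) : sigmaInv a a = 0 := by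
  have hna : 0 < ‖a‖ := norm_pos_iff.mpr ha0
  have hsub : a - aStar a = (1 - (‖a‖ ^ 2)⁻¹) • a := by
    rw [aStar, sub_smul, one_smul]
  have hns : ‖a - aStar a‖ ^ 2 = (1 - (‖a‖ ^ 2)⁻¹) ^ 2 * ‖a‖ ^ 2 := by
    rw [hsub, norm_smul, mul_pow, Real.norm_eq_abs, sq_abs]
  rw [sigmaInv, hns, hsub, norm_aStar a ha0, smul_smul, aStar]
  have h1 : ‖a‖ ^ 2 ≠ 0 := by positivity
  have h2 : (1 : ℝ) - (‖a‖ ^ 2)⁻¹ ≠ 0 := by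
    have : (1:ℝ) < (‖a‖^2)⁻¹ := (one_lt_inv₀ (by positivity)).mpr (by nlinarith)
    linarith
  have key : ∀ t : ℝ, t ≠ 0 → t - 1 ≠ 0 →
      (t⁻¹ - 1) / ((1 - t⁻¹) ^ 2 * t) * (1 - t⁻¹) = -t⁻¹ := by
    intro t h0 h1'
    have h : 1 - t⁻¹ = (t - 1) / t := by field_simp
    rw [h]
    field_simp
    ring
  have hcoef : (‖a‖⁻¹ ^ 2 - 1) / ((1 - (‖a‖ ^ 2)⁻¹) ^ 2 * ‖a‖ ^ 2) * (1 - (‖a‖ ^ 2)⁻¹)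
      = -(‖a‖ ^ 2)⁻¹ := by
    rw [inv_pow]
    exact key _ h1 (by nlinarith)
  rw [hcoef]
  module

lemma norm_sub_aStar_of_sphere (ha0 : a ≠ 0) (q : EuclideanSpace ℝ (Fin n)) (hq : ‖q‖ = 1) :
    ‖q - aStar a‖ = ‖q - a‖ / ‖a‖ := by
  have hna : 0 < ‖a‖ := norm_pos_iff.mpr ha0
  have hsq : ‖q - aStar a‖ ^ 2 = (‖q - a‖ / ‖a‖) ^ 2 := by
    rw [div_pow, norm_sub_sq_real, norm_sub_sq_real, norm_aStar a ha0, aStar,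
      real_inner_smul_right, hq]
    have h1 : ‖a‖ ^ 2 ≠ 0 := by positivity
    field_simp
    ring
  have h1 : (0:ℝ) ≤ ‖q - aStar a‖ := norm_nonneg _
  have h2 : (0:ℝ) ≤ ‖q - a‖ / ‖a‖ := by positivity
  nlinarith [hsq]

lemma norm_self_sub_aStar (ha0 : a ≠ 0) (ha1 : ‖a‖ < 1) :
    ‖a - aStar a‖ = (1 - ‖a‖ ^ 2) / ‖a‖ := by
  have hna : 0 < ‖a‖ := norm_pos_iff.mpr ha0
  have hsub : a - aStar a = (1 - (‖a‖ ^ 2)⁻¹) • a := by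
    rw [aStar, sub_smul, one_smul]
  have h2 : (1 : ℝ) - (‖a‖ ^ 2)⁻¹ < 0 := by
    have : (1:ℝ) < (‖a‖^2)⁻¹ := (one_lt_inv₀ (by positivity)).mpr (by nlinarith)
    linarith
  rw [hsub, norm_smul, Real.norm_eq_abs, abs_of_neg h2]
  field_simp
  ring

lemma dist_sigmaInv (hc1 : 1 < ‖aStar a‖) (u v : EuclideanSpace ℝ (Fin n))
    (hu : u ≠ aStar a) (hv : v ≠ aStar a) :
    ‖sigmaInv a u - sigmaInv a v‖
      = (‖aStar a‖ ^ 2 - 1) / (‖u - aStar a‖ * ‖v - aStar a‖) * ‖u - v‖ := by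
  rw [sigmaInv_eq_inversion a u hc1.le, sigmaInv_eq_inversion a v hc1.le, ← dist_eq_norm,
    EuclideanGeometry.dist_inversion_inversion hu hv, Real.sq_sqrt (by nlinarith),
    dist_eq_norm, dist_eq_norm, dist_eq_norm]

lemma sigmaInv_sigmaInv (hc1 : 1 < ‖aStar a‖) (z : EuclideanSpace ℝ (Fin n)) :
    sigmaInv a (sigmaInv a z) = z := by
  have hR : Real.sqrt (‖aStar a‖ ^ 2 - 1) ≠ 0 :=
    (Real.sqrt_pos.mpr (by nlinarith)).ne'
  rw [sigmaInv_eq_inversion a z hc1.le, sigmaInv_eq_inversion a _ hc1.le,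
    EuclideanGeometry.inversion_inversion _ hR]

lemma norm_sigmaInv_sphere (ha0 : a ≠ 0) (ha1 : ‖a‖ < 1) (q : EuclideanSpace ℝ (Fin n))
    (hq : ‖q‖ = 1) : ‖sigmaInv a q‖ = 1 := by
  have hna : 0 < ‖a‖ := norm_pos_iff.mpr ha0
  have hc1 : 1 < ‖aStar a‖ := by
    rw [norm_aStar a ha0]; exact (one_lt_inv₀ hna).mpr ha1
  have hqc : q ≠ aStar a := by
    intro h; rw [← h] at hc1; rw [hq] at hc1; exact lt_irrefl 1 hc1
  have hac : a ≠ aStar a := by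
    intro h; rw [← h] at hc1; linarith
  have hqa : ‖q - a‖ ≠ 0 := by
    have : ‖q‖ - ‖a‖ ≤ ‖q - a‖ := norm_sub_norm_le q a
    rw [hq] at this
    have : (0:ℝ) < ‖q - a‖ := by linarith
    exact this.ne'
  calc ‖sigmaInv a q‖ = ‖sigmaInv a q - sigmaInv a a‖ := by
        rw [sigmaInv_self a ha0 ha1, sub_zero]
    _ = (‖aStar a‖ ^ 2 - 1) / (‖q - aStar a‖ * ‖a - aStar a‖) * ‖q - a‖ :=
        dist_sigmaInv a hc1 q a hqc hac
    _ = 1 := by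
        rw [norm_sub_aStar_of_sphere a ha0 q hq, norm_self_sub_aStar a ha0 ha1,
          norm_aStar a ha0]
        have h1 : (1:ℝ) - ‖a‖ ^ 2 ≠ 0 := by nlinarith
        field_simp

end helpers

/-- Theorem: for `a ∈ Bⁿ \ {0}` and all `x, y ∈ Bⁿ`,
`((1−|a|)/(1+|a|))·ĉ_{Bⁿ}(x,y) ≤ ĉ_{Bⁿ}(σ_a(x), σ_a(y)) ≤ ((1+|a|)/(1−|a|))·ĉ_{Bⁿ}(x,y)`. -/
theorem ctilde_mobius_distortion {n : ℕ} (hn : 2 ≤ n)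
    (a x y : EuclideanSpace ℝ (Fin n)) (ha0 : a ≠ 0) (ha1 : ‖a‖ < 1)
    (hx : ‖x‖ < 1) (hy : ‖y‖ < 1) :
    (1 - ‖a‖) / (1 + ‖a‖) * ctilde (Metric.ball (0 : EuclideanSpace ℝ (Fin n)) 1) x y ≤
      ctilde (Metric.ball (0 : EuclideanSpace ℝ (Fin n)) 1) (sigmaInv a x) (sigmaInv a y) ∧
    ctilde (Metric.ball (0 : EuclideanSpace ℝ (Fin n)) 1) (sigmaInv a x) (sigmaInv a y) ≤
      (1 + ‖a‖) / (1 - ‖a‖) * ctilde (Metric.ball (0 : EuclideanSpace ℝ (Fin n)) 1) x y := by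
  classical
  haveI : Nonempty (Fin n) := ⟨⟨0, by omega⟩⟩
  have hna : 0 < ‖a‖ := norm_pos_iff.mpr ha0
  have hc1 : 1 < ‖aStar a‖ := by rw [norm_aStar a ha0]; exact (one_lt_inv₀ hna).mpr ha1
  have hρ : 0 < ‖aStar a‖ ^ 2 - 1 := by nlinarith
  have hlo : (0:ℝ) < ‖aStar a‖ - 1 := by linarith
  -- frontier of the unit ball is the unit sphere
  have hfr : frontier (ball (0:EuclideanSpace ℝ (Fin n)) 1) = sphere (0:EuclideanSpace ℝ (Fin n)) 1 := frontier_ball 0 one_ne_zero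
  have hsph : (sphere (0:EuclideanSpace ℝ (Fin n)) 1).Nonempty := NormedSpace.sphere_nonempty.mpr zero_le_one
  haveI : Nonempty ↥(sphere (0:EuclideanSpace ℝ (Fin n)) 1) := hsph.to_subtype
  -- distance bounds from points of the closed ball to a*
  have hzlo : ∀ z : EuclideanSpace ℝ (Fin n), ‖z‖ ≤ 1 → ‖aStar a‖ - 1 ≤ ‖z - aStar a‖ := by
    intro z hz
    calc ‖aStar a‖ - 1 ≤ ‖aStar a‖ - ‖z‖ := by linarith
      _ ≤ ‖aStar a - z‖ := norm_sub_norm_le _ _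
      _ = ‖z - aStar a‖ := norm_sub_rev _ _
  have hzhi : ∀ z : EuclideanSpace ℝ (Fin n), ‖z‖ ≤ 1 → ‖z - aStar a‖ ≤ ‖aStar a‖ + 1 := by
    intro z hz
    calc ‖z - aStar a‖ ≤ ‖z‖ + ‖aStar a‖ := norm_sub_le _ _
      _ ≤ ‖aStar a‖ + 1 := by linarith
  have hnec : ∀ z : EuclideanSpace ℝ (Fin n), ‖z‖ ≤ 1 → z ≠ aStar a := by
    intro z hz h
    rw [h] at hz; linarith
  -- positivity of sphere distances
  have hApos : ∀ z : EuclideanSpace ℝ (Fin n), ‖z‖ < 1 → ∀ q : EuclideanSpace ℝ (Fin n), ‖q‖ = 1 → 0 < ‖z - q‖ := by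
    intro z hz q hq
    have h1 : ‖q‖ - ‖z‖ ≤ ‖q - z‖ := norm_sub_norm_le _ _
    rw [hq, norm_sub_rev] at h1
    linarith
  -- conversion of constants
  have hinv1 : 1 < ‖a‖⁻¹ := (one_lt_inv₀ hna).mpr ha1
  have hKc : (‖aStar a‖ + 1) / (‖aStar a‖ - 1) = (1 + ‖a‖) / (1 - ‖a‖) := by
    rw [norm_aStar a ha0, div_eq_div_iff (by linarith) (by linarith)]
    field_simp
  have hkc : (‖aStar a‖ - 1) / (‖aStar a‖ + 1) = (1 - ‖a‖) / (1 + ‖a‖) := by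
    rw [norm_aStar a ha0, div_eq_div_iff (by linarith) (by positivity)]
    field_simp
  -- the pointwise two-sided estimate
  have hpt : ∀ q : EuclideanSpace ℝ (Fin n), ‖q‖ = 1 →
      (1 - ‖a‖) / (1 + ‖a‖) * (‖x - y‖ / max ‖x - q‖ ‖y - q‖) ≤
        ‖sigmaInv a x - sigmaInv a y‖ /
          max ‖sigmaInv a x - sigmaInv a q‖ ‖sigmaInv a y - sigmaInv a q‖ ∧
      ‖sigmaInv a x - sigmaInv a y‖ /
          max ‖sigmaInv a x - sigmaInv a q‖ ‖sigmaInv a y - sigmaInv a q‖ ≤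
        (1 + ‖a‖) / (1 - ‖a‖) * (‖x - y‖ / max ‖x - q‖ ‖y - q‖) := by
    intro q hq
    rw [dist_sigmaInv a hc1 x y (hnec x hx.le) (hnec y hy.le),
      dist_sigmaInv a hc1 x q (hnec x hx.le) (hnec q hq.le),
      dist_sigmaInv a hc1 y q (hnec y hy.le) (hnec q hq.le), ← hKc, ← hkc]
    exact key_chain (‖aStar a‖ ^ 2 - 1) ‖x - aStar a‖ ‖y - aStar a‖ ‖q - aStar a‖
      ‖x - q‖ ‖y - q‖ ‖x - y‖ (‖aStar a‖ - 1) (‖aStar a‖ + 1) hρ hlo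
      (hzlo x hx.le) (hzhi x hx.le) (hzlo y hy.le) (hzhi y hy.le)
      (hzlo q hq.le) (hzhi q hq.le) (hApos x hx q hq) (hApos y hy q hq)
      (norm_nonneg _)
  -- rewrite both ctilde's as suprema over the unit sphere
  have hct : ∀ u v : EuclideanSpace ℝ (Fin n), ctilde (ball (0:EuclideanSpace ℝ (Fin n)) 1) u v
      = ⨆ p : ↥(sphere (0:EuclideanSpace ℝ (Fin n)) 1), ‖u - v‖ / max ‖u - (p:EuclideanSpace ℝ (Fin n))‖ ‖v - (p:EuclideanSpace ℝ (Fin n))‖ := by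
    intro u v
    unfold ctilde
    rw [hfr]
  -- the sphere map induced by sigmaInv
  have hmem : ∀ p : ↥(sphere (0:EuclideanSpace ℝ (Fin n)) 1), sigmaInv a (p:EuclideanSpace ℝ (Fin n)) ∈ sphere (0:EuclideanSpace ℝ (Fin n)) 1 := by
    intro p
    rw [mem_sphere_zero_iff_norm]
    exact norm_sigmaInv_sphere a ha0 ha1 _ (mem_sphere_zero_iff_norm.mp p.2)
  -- bounded above facts
  have hxa : (0:ℝ) < 1 - ‖x‖ := by linarith
  have hGb : ∀ q : ↥(sphere (0:EuclideanSpace ℝ (Fin n)) 1),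
      ‖x - y‖ / max ‖x - (q:EuclideanSpace ℝ (Fin n))‖ ‖y - (q:EuclideanSpace ℝ (Fin n))‖ ≤ ‖x - y‖ / (1 - ‖x‖) := by
    intro q
    have hq : ‖(q:EuclideanSpace ℝ (Fin n))‖ = 1 := mem_sphere_zero_iff_norm.mp q.2
    apply div_le_div_of_nonneg_left (norm_nonneg _) hxa
    calc 1 - ‖x‖ ≤ ‖x - (q:EuclideanSpace ℝ (Fin n))‖ := by
          have h1 : ‖(q:EuclideanSpace ℝ (Fin n))‖ - ‖x‖ ≤ ‖(q:EuclideanSpace ℝ (Fin n)) - x‖ := norm_sub_norm_le _ _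
          rw [hq, norm_sub_rev] at h1
          exact h1
      _ ≤ max ‖x - (q:EuclideanSpace ℝ (Fin n))‖ ‖y - (q:EuclideanSpace ℝ (Fin n))‖ := le_max_left _ _
  have hGbdd : BddAbove (Set.range fun q : ↥(sphere (0:EuclideanSpace ℝ (Fin n)) 1) =>
      ‖x - y‖ / max ‖x - (q:EuclideanSpace ℝ (Fin n))‖ ‖y - (q:EuclideanSpace ℝ (Fin n))‖) := by
    refine ⟨‖x - y‖ / (1 - ‖x‖), ?_⟩
    rintro _ ⟨q, rfl⟩
    exact hGb q
  have hFbdd : BddAbove (Set.range fun p : ↥(sphere (0:EuclideanSpace ℝ (Fin n)) 1) =>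
      ‖sigmaInv a x - sigmaInv a y‖ /
        max ‖sigmaInv a x - (p:EuclideanSpace ℝ (Fin n))‖ ‖sigmaInv a y - (p:EuclideanSpace ℝ (Fin n))‖) := by
    refine ⟨(1 + ‖a‖) / (1 - ‖a‖) * (‖x - y‖ / (1 - ‖x‖)), ?_⟩
    rintro _ ⟨p, rfl⟩
    -- p = sigmaInv of some sphere point
    have hp : ‖(p:EuclideanSpace ℝ (Fin n))‖ = 1 := mem_sphere_zero_iff_norm.mp p.2
    have hqmem : sigmaInv a (p:EuclideanSpace ℝ (Fin n)) ∈ sphere (0:EuclideanSpace ℝ (Fin n)) 1 := hmem p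
    set q : ↥(sphere (0:EuclideanSpace ℝ (Fin n)) 1) := ⟨sigmaInv a (p:EuclideanSpace ℝ (Fin n)), hqmem⟩ with hqdef
    have hback : sigmaInv a (q:EuclideanSpace ℝ (Fin n)) = (p:EuclideanSpace ℝ (Fin n)) := sigmaInv_sigmaInv a hc1 (p:EuclideanSpace ℝ (Fin n))
    have hqn : ‖(q:EuclideanSpace ℝ (Fin n))‖ = 1 := mem_sphere_zero_iff_norm.mp q.2
    have h1 := (hpt (q:EuclideanSpace ℝ (Fin n)) hqn).2
    rw [hback] at h1
    refine h1.trans ?_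
    have hK0 : (0:ℝ) ≤ (1 + ‖a‖) / (1 - ‖a‖) := le_of_lt (div_pos (by linarith) (by linarith))
    exact mul_le_mul_of_nonneg_left (hGb q) hK0
  have hK0 : (0:ℝ) ≤ (1 + ‖a‖) / (1 - ‖a‖) := le_of_lt (div_pos (by linarith) (by linarith))
  have hk0 : (0:ℝ) < (1 - ‖a‖) / (1 + ‖a‖) := div_pos (by linarith) (by linarith)
  rw [hct x y, hct (sigmaInv a x) (sigmaInv a y)]
  constructor
  · -- lower bound
    rw [← le_div_iff₀' hk0]
    apply ciSup_le
    intro q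
    have hqn : ‖(q:EuclideanSpace ℝ (Fin n))‖ = 1 := mem_sphere_zero_iff_norm.mp q.2
    have h1 := (hpt (q:EuclideanSpace ℝ (Fin n)) hqn).1
    have h2 : ‖sigmaInv a x - sigmaInv a y‖ /
        max ‖sigmaInv a x - sigmaInv a (q:EuclideanSpace ℝ (Fin n))‖ ‖sigmaInv a y - sigmaInv a (q:EuclideanSpace ℝ (Fin n))‖ ≤
        ⨆ p : ↥(sphere (0:EuclideanSpace ℝ (Fin n)) 1), ‖sigmaInv a x - sigmaInv a y‖ /
          max ‖sigmaInv a x - (p:EuclideanSpace ℝ (Fin n))‖ ‖sigmaInv a y - (p:EuclideanSpace ℝ (Fin n))‖ :=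
      le_ciSup hFbdd (⟨sigmaInv a (q:EuclideanSpace ℝ (Fin n)), hmem q⟩ : ↥(sphere (0:EuclideanSpace ℝ (Fin n)) 1))
    rw [le_div_iff₀' hk0]
    exact h1.trans h2
  · -- upper bound
    apply ciSup_le
    intro p
    have hqmem : sigmaInv a (p:EuclideanSpace ℝ (Fin n)) ∈ sphere (0:EuclideanSpace ℝ (Fin n)) 1 := hmem p
    set q : ↥(sphere (0:EuclideanSpace ℝ (Fin n)) 1) := ⟨sigmaInv a (p:EuclideanSpace ℝ (Fin n)), hqmem⟩ with hqdef
    have hback : sigmaInv a (q:EuclideanSpace ℝ (Fin n)) = (p:EuclideanSpace ℝ (Fin n)) := sigmaInv_sigmaInv a hc1 (p:EuclideanSpace ℝ (Fin n))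
    have hqn : ‖(q:EuclideanSpace ℝ (Fin n))‖ = 1 := mem_sphere_zero_iff_norm.mp q.2
    have h1 := (hpt (q:EuclideanSpace ℝ (Fin n)) hqn).2
    rw [hback] at h1
    refine h1.trans ?_
    exact mul_le_mul_of_nonneg_left (le_ciSup hGbdd q) hK0
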